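/- Let C = {c_1,…,c_m} be candidate locations, E = {e_1,…,e_n} expert locations in a normed vector space, and ≻^k an inducible top-k ranking profile. Then for any two candidates g ≠ h, the supremum of q̂_h − q̂_g over all q̂ ∈ ℝ^m consistent with ≻^k equals d_G(g, h), the shortest directed path distance from g to h in the weighted graph G(C, E, ≻^k); in particular the supremum is +∞ exactly when there is no directed g → h path. -/

import Mathlib

open scoped Classical

section VotingDefs

variable {V : Type*} [NormedAddCommGroup V] [NormedSpace ℝ V]

/-- An expert with top-`k` ranking `pref : Fin k → Fin m` prefers candidate `j` to `j'`:
`j` is ranked at some position `h`, and `j'` is either unranked or ranked strictly later. -/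
def Prefers {k m : ℕ} (pref : Fin k → Fin m) (j j' : Fin m) : Prop :=
  ∃ h : Fin k, pref h = j ∧
    ((∀ h' : Fin k, pref h' ≠ j') ∨ ∃ h' : Fin k, pref h' = j' ∧ h < h')

/-- `q` is consistent with the profile `pref` of top-`k` rankings, given candidate
locations `c` and expert locations `e`. -/
def Consistent {n k m : ℕ} (c : Fin m → V) (e : Fin n → V)
    (pref : Fin n → Fin k → Fin m) (q : Fin m → ℝ) : Prop :=
  ∀ (i : Fin n) (j j' : Fin m), Prefers (pref i) j j' →
    q j' - ‖e i - c j'‖ ≤ q j - ‖e i - c j‖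

/-- Edge relation of the graph `G(C, E, ≻^k)`. -/
def HasEdge {n k m : ℕ} (pref : Fin n → Fin k → Fin m) (j j' : Fin m) : Prop :=
  ∃ i : Fin n, Prefers (pref i) j j'

/-- Weight of the edge `j → j'` in `G(C, E, ≻^k)`: the minimum of
`‖e i - c j'‖ - ‖e i - c j‖` over experts `i` preferring `j` to `j'`. -/
noncomputable def weightG {n k m : ℕ} (c : Fin m → V) (e : Fin n → V)
    (pref : Fin n → Fin k → Fin m) (j j' : Fin m) : ℝ :=
  sInf {x : ℝ | ∃ i : Fin n, Prefers (pref i) j j' ∧ x = ‖e i - c j'‖ - ‖e i - c j‖}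

/-- A directed walk along `edge` from `g` to `h`, recorded as its list of vertices. -/
def IsWalk {α : Type*} (edge : α → α → Prop) (l : List α) (g h : α) : Prop :=
  l.Chain' edge ∧ l.head? = some g ∧ l.getLast? = some h

/-- Total weight of a walk (sum of the weights of consecutive pairs). -/
noncomputable def walkWeight {α : Type*} (w : α → α → ℝ) (l : List α) : ℝ :=
  ((l.zip l.tail).map fun p => w p.1 p.2).sum

/-- Shortest directed path distance; `+∞` if there is no directed path. -/
noncomputable def distG {α : Type*} (edge : α → α → Prop) (w : α → α → ℝ) (g h : α) : EReal :=
  sInf {x : EReal | ∃ l : List α, IsWalk edge l g h ∧ x = ((walkWeight w l : ℝ) : EReal)}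

/-- Distance (number of edges) in an unweighted directed graph; `⊤` if unreachable. -/
noncomputable def hopDist {α : Type*} (edge : α → α → Prop) (g h : α) : ℕ∞ :=
  sInf {x : ℕ∞ | ∃ l : List α, IsWalk edge l g h ∧ x = ((l.length - 1 : ℕ) : ℕ∞)}

/-- `diam(G, S)`: the longest shortest-path length between two vertices of `S`. -/
noncomputable def diamS {α : Type*} (edge : α → α → Prop) (S : Set α) : ℕ∞ :=
  ⨆ (u : α) (_ : u ∈ S) (v : α) (_ : v ∈ S), hopDist edge u v

/-- Edge relation of the unweighted graph `G(C, E, ≻^k)[δ]`. -/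
def EdgeDelta {n k m : ℕ} (e : Fin n → V) (pref : Fin n → Fin k → Fin m) (δ : ℝ)
    (j j' : Fin m) : Prop :=
  ∃ i i' : Fin n, Prefers (pref i) j j' ∧ Prefers (pref i') j' j ∧ ‖e i - e i'‖ ≤ δ

/-- Minimum cardinality of an internal `δ`-cover of `Θ`; `⊤` if no finite cover exists. -/
noncomputable def coverNum (Θ : Set V) (δ : ℝ) : ℕ∞ :=
  sInf {x : ℕ∞ | ∃ X : Finset V, ↑X ⊆ Θ ∧ (∀ θ ∈ Θ, ∃ v ∈ X, ‖θ - v‖ ≤ δ) ∧ x = (X.card : ℕ∞)}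

end VotingDefs

section ProofAux

variable {V : Type*} [NormedAddCommGroup V] [NormedSpace ℝ V]
variable {n k m : ℕ} (c : Fin m → V) (e : Fin n → V) (pref : Fin n → Fin k → Fin m)

lemma weight_bddBelow (j j' : Fin m) :
    BddBelow {x : ℝ | ∃ i : Fin n, Prefers (pref i) j j' ∧ x = ‖e i - c j'‖ - ‖e i - c j‖} := by
  have hsub : {x : ℝ | ∃ i : Fin n, Prefers (pref i) j j' ∧ x = ‖e i - c j'‖ - ‖e i - c j‖}
      ⊆ Set.range (fun i : Fin n => ‖e i - c j'‖ - ‖e i - c j‖) := by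
    rintro x ⟨i, _, rfl⟩; exact ⟨i, rfl⟩
  exact ((Set.finite_range _).subset hsub).bddBelow

lemma consistent_edge_le {q : Fin m → ℝ} (hq : Consistent c e pref q)
    {j j' : Fin m} (hε : HasEdge pref j j') :
    q j' - q j ≤ weightG c e pref j j' := by
  obtain ⟨i0, hi0⟩ := hε
  refine le_csInf ⟨‖e i0 - c j'‖ - ‖e i0 - c j‖, i0, hi0, rfl⟩ ?_
  rintro x ⟨i, hi, rfl⟩
  have := hq i j j' hi
  linarith

lemma weight_le_of_prefers {j j' : Fin m} {i : Fin n} (hi : Prefers (pref i) j j') :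
    weightG c e pref j j' ≤ ‖e i - c j'‖ - ‖e i - c j‖ :=
  csInf_le (weight_bddBelow c e pref j j') ⟨i, hi, rfl⟩

lemma chain_telescope {q : Fin m → ℝ} (hq : Consistent c e pref q) :
    ∀ (l : List (Fin m)) (a b : Fin m), l.Chain' (HasEdge pref) →
      l.head? = some a → l.getLast? = some b →
      q b - q a ≤ walkWeight (weightG c e pref) l := by
  intro l
  induction l with
  | nil => intro a b _ hh _; simp at hh
  | cons x t ih =>
    intro a b hch hhead hlast
    have hax : x = a := by simpa using hhead
    subst hax
    cases t with
    | nil =>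
      have hxb : x = b := by simpa using hlast
      subst hxb
      simp [walkWeight]
    | cons y t' =>
      have hedge : HasEdge pref x y := (List.isChain_cons_cons.1 hch).1
      have hch' := (List.isChain_cons_cons.1 hch).2
      have hlast' : (y :: t').getLast? = some b := by
        rw [List.getLast?_cons_cons] at hlast; exact hlast
      have h1 := ih y b hch' rfl hlast'
      have h2 := consistent_edge_le c e pref hq hedge
      have hw : walkWeight (weightG c e pref) (x :: y :: t')
          = weightG c e pref x y + walkWeight (weightG c e pref) (y :: t') := by
        simp [walkWeight]
      rw [hw]; linarith

lemma walk_single {α : Type*} (edge : α → α → Prop) (h : α) :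
    IsWalk edge [h] h h := by
  refine ⟨List.isChain_singleton h, by simp, by simp⟩

lemma walkWeight_single {α : Type*} (w : α → α → ℝ) (h : α) :
    walkWeight w [h] = 0 := by simp [walkWeight]

lemma walk_prepend {α : Type*} {edge : α → α → Prop} {w : α → α → ℝ} {l : List α}
    {j j' h : α} (he : edge j j') (hl : IsWalk edge l j' h) :
    IsWalk edge (j :: l) j h ∧ walkWeight w (j :: l) = w j j' + walkWeight w l := by
  obtain ⟨hch, hhead, hlast⟩ := hl
  cases l with
  | nil => simp at hhead
  | cons y t =>
    have hy : y = j' := by simpa using hhead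
    subst hy
    refine ⟨⟨List.isChain_cons_cons.2 ⟨he, hch⟩, by simp, by rw [List.getLast?_cons_cons]; exact hlast⟩, ?_⟩
    simp [walkWeight]

lemma ereal_coe_sInf {S : Set ℝ} (hne : S.Nonempty) (hbd : BddBelow S) :
    sInf (Real.toEReal '' S) = ((sInf S : ℝ) : EReal) := by
  apply le_antisymm
  · by_contra hlt
    push_neg at hlt
    obtain ⟨r, hr1, hr2⟩ := EReal.lt_iff_exists_real_btwn.1 hlt
    have hr1' : sInf S < r := by exact_mod_cast hr1
    obtain ⟨x, hx, hxr⟩ := (csInf_lt_iff hbd hne).1 hr1'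
    have h1 : sInf (Real.toEReal '' S) ≤ (x : EReal) := sInf_le ⟨x, hx, rfl⟩
    have h2 : (x : EReal) < (r : EReal) := by exact_mod_cast hxr
    exact absurd (lt_of_le_of_lt (h1.trans h2.le) hr2) (lt_irrefl _)
  · apply le_sInf
    rintro b ⟨x, hx, rfl⟩
    exact_mod_cast csInf_le hbd hx

/-- The key construction: shift a consistent vector. -/
lemma exists_consistent_shifted {q0 : Fin m → ℝ} (hq0 : Consistent c e pref q0)
    (h : Fin m) (T : ℝ) (hT : 0 ≤ T) :
    ∃ q : Fin m → ℝ, Consistent c e pref q ∧ q h = q0 h ∧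
      ∀ g : Fin m,
        ((¬ (∃ l, IsWalk (HasEdge pref) l g h)) → q g = q0 g - T) ∧
        ((∃ l, IsWalk (HasEdge pref) l g h) →
          q g = max (q0 g - T) (q0 h - sInf {x : ℝ | ∃ l, IsWalk (HasEdge pref) l g h ∧
            x = walkWeight (weightG c e pref) l})) := by
  set w := weightG c e pref with hwdef
  set edge := HasEdge pref with hedgedef
  set S : Fin m → Set ℝ := fun j => {x : ℝ | ∃ l, IsWalk edge l j h ∧ x = walkWeight w l}
    with hSdef
  have hlow : ∀ j, ∀ x ∈ S j, q0 h - q0 j ≤ x := by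
    rintro j x ⟨l, ⟨hch, hhd, hlt⟩, rfl⟩
    exact chain_telescope c e pref hq0 l j h hch hhd hlt
  have hbd : ∀ j, BddBelow (S j) := fun j => ⟨q0 h - q0 j, hlow j⟩
  have hSh : (0 : ℝ) ∈ S h := ⟨[h], walk_single edge h, (walkWeight_single w h).symm⟩
  have hdh : sInf (S h) = 0 := by
    apply le_antisymm (csInf_le (hbd h) hSh)
    apply le_csInf ⟨0, hSh⟩
    intro x hx
    have := hlow h x hx
    linarith
  set q : Fin m → ℝ := fun j => if (S j).Nonempty then max (q0 j - T) (q0 h - sInf (S j))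
    else q0 j - T with hqdef
  have hq_pos : ∀ j, (S j).Nonempty → q j = max (q0 j - T) (q0 h - sInf (S j)) :=
    fun j hj => if_pos hj
  have hq_neg : ∀ j, ¬(S j).Nonempty → q j = q0 j - T := fun j hj => if_neg hj
  have hqge : ∀ j, q0 j - T ≤ q j := by
    intro j
    by_cases hj : (S j).Nonempty
    · rw [hq_pos j hj]; exact le_max_left _ _
    · rw [hq_neg j hj]
  refine ⟨q, ?_, ?_, ?_⟩
  · -- consistency
    intro i j j' hpref
    have hwle : w j j' ≤ ‖e i - c j'‖ - ‖e i - c j‖ := weight_le_of_prefers c e pref hpref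
    have hedge : edge j j' := ⟨i, hpref⟩
    have hq0e : q0 j' - q0 j ≤ w j j' := consistent_edge_le c e pref hq0 hedge
    have key : q j' ≤ q j + w j j' := by
      by_cases hj' : (S j').Nonempty
      · -- j reachable too
        have hj'2 := hj'
        obtain ⟨x0, l0, hl0, hx0⟩ := hj'2
        have hprep := walk_prepend (w := w) hedge hl0
        have hjne : (S j).Nonempty := by
          refine ⟨w j j' + x0, j :: l0, hprep.1, ?_⟩
          rw [hprep.2, hx0]
        have hdle : sInf (S j) ≤ w j j' + sInf (S j') := by
          have : sInf (S j) - w j j' ≤ sInf (S j') := by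
            refine le_csInf ⟨x0, l0, hl0, hx0⟩ ?_
            rintro x ⟨l, hl, rfl⟩
            have hprep' := walk_prepend (w := w) hedge hl
            have : sInf (S j) ≤ w j j' + walkWeight w l := by
              have hmem : w j j' + walkWeight w l ∈ S j :=
                ⟨j :: l, hprep'.1, hprep'.2.symm⟩
              exact csInf_le (hbd j) hmem
            linarith
          linarith
        rw [hq_pos j' hj', hq_pos j hjne]
        apply max_le
        · calc q0 j' - T ≤ (q0 j - T) + w j j' := by linarith
            _ ≤ max (q0 j - T) (q0 h - sInf (S j)) + w j j' :=
              add_le_add_left (le_max_left _ _) _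
        · calc q0 h - sInf (S j') ≤ (q0 h - sInf (S j)) + w j j' := by linarith
            _ ≤ max (q0 j - T) (q0 h - sInf (S j)) + w j j' :=
              add_le_add_left (le_max_right _ _) _
      · rw [hq_neg j' hj']
        calc q0 j' - T ≤ (q0 j - T) + w j j' := by linarith
          _ ≤ q j + w j j' := add_le_add_left (hqge j) _
    linarith
  · -- q h = q0 h
    have hne : (S h).Nonempty := ⟨0, hSh⟩
    rw [hq_pos h hne, hdh, sub_zero]
    exact max_eq_right (by linarith)
  · intro g
    constructor
    · intro hno
      have hg : ¬ (S g).Nonempty := by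
        rintro ⟨x, l, hl, _⟩; exact hno ⟨l, hl⟩
      exact hq_neg g hg
    · intro hyes
      obtain ⟨l, hl⟩ := hyes
      have hne : (S g).Nonempty := ⟨walkWeight w l, l, hl, rfl⟩
      exact hq_pos g hne

end ProofAux

/-- For inducible top-`k` profiles and candidates `g ≠ h`, the supremum of
`q̂ h - q̂ g` over all consistent `q̂` equals the shortest directed path distance from `g` to
`h` in `G(C, E, ≻^k)`; in particular that supremum is `+∞` exactly when there is no directed
`g → h` path. -/
theorem statement0 {V : Type*} [NormedAddCommGroup V] [NormedSpace ℝ V]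
    {n k m : ℕ} (c : Fin m → V) (e : Fin n → V) (pref : Fin n → Fin k → Fin m)
    (hinj : ∀ i, Function.Injective (pref i))
    (hind : ∃ q : Fin m → ℝ, Consistent c e pref q)
    (g h : Fin m) (hgh : g ≠ h) :
    sSup {x : EReal | ∃ q : Fin m → ℝ, Consistent c e pref q ∧ x = ((q h - q g : ℝ) : EReal)}
        = distG (HasEdge pref) (weightG c e pref) g h ∧
      ((¬ ∃ l : List (Fin m), IsWalk (HasEdge pref) l g h) ↔
        sSup {x : EReal | ∃ q : Fin m → ℝ, Consistent c e pref q ∧ x = ((q h - q g : ℝ) : EReal)}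
          = ⊤) := by
  obtain ⟨q0, hq0⟩ := hind
  set w := weightG c e pref with hwdef
  set edge := HasEdge pref with hedgedef
  set QSet : Set EReal := {x | ∃ q : Fin m → ℝ, Consistent c e pref q ∧
    x = ((q h - q g : ℝ) : EReal)} with hQdef
  set Sg : Set ℝ := {x | ∃ l, IsWalk edge l g h ∧ x = walkWeight w l} with hSgdef
  have hub : sSup QSet ≤ distG edge w g h := by
    apply le_sInf
    rintro x ⟨l, hl, rfl⟩
    apply sSup_le
    rintro y ⟨q, hq, rfl⟩
    exact EReal.coe_le_coe_iff.2 (chain_telescope c e pref hq l g h hl.1 hl.2.1 hl.2.2)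
  have hiff : (¬ ∃ l, IsWalk edge l g h) ↔ distG edge w g h = ⊤ := by
    constructor
    · intro hno
      rw [distG]
      suffices hs : {x : EReal | ∃ l, IsWalk edge l g h ∧ x = ((walkWeight w l : ℝ) : EReal)} = ∅ by
        rw [hs]; exact sInf_empty
      ext x
      simp only [Set.mem_setOf_eq, Set.mem_empty_iff_false, iff_false]
      rintro ⟨l, hl, _⟩
      exact hno ⟨l, hl⟩
    · rintro htop ⟨l, hl⟩
      have hle : distG edge w g h ≤ ((walkWeight w l : ℝ) : EReal) := sInf_le ⟨l, hl, rfl⟩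
      rw [htop] at hle
      exact absurd (lt_of_le_of_lt hle (EReal.coe_lt_top _)) (lt_irrefl _)
  have hmain : sSup QSet = distG edge w g h := by
    by_cases hre : Sg.Nonempty
    · have himg : {x : EReal | ∃ l, IsWalk edge l g h ∧ x = ((walkWeight w l : ℝ) : EReal)}
          = Real.toEReal '' Sg := by
        ext x
        constructor
        · rintro ⟨l, hl, rfl⟩; exact ⟨walkWeight w l, ⟨l, hl, rfl⟩, rfl⟩
        · rintro ⟨y, ⟨l, hl, rfl⟩, rfl⟩; exact ⟨l, hl, rfl⟩
      have hbdSg : BddBelow Sg := ⟨q0 h - q0 g, by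
        rintro x ⟨l, hl, rfl⟩
        exact chain_telescope c e pref hq0 l g h hl.1 hl.2.1 hl.2.2⟩
      have hdist : distG edge w g h = ((sInf Sg : ℝ) : EReal) := by
        rw [distG, himg]
        exact ereal_coe_sInf hre hbdSg
      obtain ⟨q, hq, hqh, hqg⟩ := exists_consistent_shifted c e pref hq0 h
        (max 0 (sInf Sg - q0 h + q0 g)) (le_max_left _ _)
      have hreach : ∃ l, IsWalk edge l g h := by
        obtain ⟨x, l, hl, _⟩ := hre
        exact ⟨l, hl⟩
      have hqg' := (hqg g).2 hreach
      have hTge : sInf Sg - q0 h + q0 g ≤ max 0 (sInf Sg - q0 h + q0 g) := le_max_right _ _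
      have hqgval : q g = q0 h - sInf Sg := by
        rw [hqg']
        exact max_eq_right (by linarith)
      have hval : q h - q g = sInf Sg := by rw [hqh, hqgval]; ring
      have hmem : ((sInf Sg : ℝ) : EReal) ∈ QSet := ⟨q, hq, by rw [hval]⟩
      exact le_antisymm hub (hdist ▸ le_sSup hmem)
    · have hno : ¬ ∃ l, IsWalk edge l g h := by
        rintro ⟨l, hl⟩
        exact hre ⟨walkWeight w l, l, hl, rfl⟩
      have hsup : sSup QSet = ⊤ := by
        rw [sSup_eq_top]
        intro b hb
        obtain ⟨r, hbr, _⟩ := EReal.lt_iff_exists_real_btwn.1 hb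
        set T : ℝ := max 0 (r - (q0 h - q0 g)) with hTdef
        obtain ⟨q, hq, hqh, hqg⟩ := exists_consistent_shifted c e pref hq0 h T (le_max_left _ _)
        have hqgval : q g = q0 g - T := (hqg g).1 hno
        refine ⟨((q h - q g : ℝ) : EReal), ⟨q, hq, rfl⟩, lt_of_lt_of_le hbr ?_⟩
        have : r ≤ q h - q g := by
          rw [hqh, hqgval]
          have : r - (q0 h - q0 g) ≤ T := le_max_right _ _
          linarith
        exact_mod_cast this
      rw [hsup, hiff.1 hno]
  exact ⟨hmain, by rw [hmain]; exact hiff⟩
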